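/- Let X be a metric space, V a real vector space of finite dimension r, and let ρ be a Glaeser operation on bundles of linear subspaces of V over X. Then for any bundle E, ρ^i(E) = ρ^{2r}(E) for all i ≥ 2r. -/

import Mathlib

open Module Metric Filter Topology


/-- A bundle of linear subspaces of `V` over `X`: each fibre is a linear subspace. -/
def IsBundle {X V : Type*} [AddCommGroup V] [Module ℝ V] (E : Set (X × V)) : Prop :=
  ∀ a : X, ∃ S : Submodule ℝ V, {v : V | (a, v) ∈ E} = (S : Set V)

/-- A Glaeser operation on bundles of linear subspaces of `V` over `X`:
it maps bundles to bundles, contains the closure, and is local. -/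
structure IsGlaeserOperation {X V : Type*} [MetricSpace X] [NormedAddCommGroup V]
    [NormedSpace ℝ V] (ρ : Set (X × V) → Set (X × V)) : Prop where
  bundle : ∀ E : Set (X × V), IsBundle E → IsBundle (ρ E)
  closure_subset : ∀ E : Set (X × V), IsBundle E → closure E ⊆ ρ E
  isLocal : ∀ E F : Set (X × V), IsBundle E → IsBundle F → ∀ U : Set X, IsOpen U →
    (∀ a ∈ U, {v : V | (a, v) ∈ E} = {v : V | (a, v) ∈ F}) →
    ∀ a ∈ U, {v : V | (a, v) ∈ ρ E} = {v : V | (a, v) ∈ ρ F}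


/-- Key compactness lemma: if points `z n → x` and the fibre of `A` over each `z n` is a
subspace of dimension `≥ k`, then any submodule containing the fibre of `closure A` over `x`
has dimension `≥ k`. -/
lemma glaeser_closure_dim {X V : Type*} [MetricSpace X] [NormedAddCommGroup V]
    [NormedSpace ℝ V] [FiniteDimensional ℝ V]
    (A : Set (X × V)) (S : X → Submodule ℝ V)
    (hS : ∀ b, {v : V | (b, v) ∈ A} = (S b : Set V)) {x : X} {z : ℕ → X}
    (hz : Tendsto z atTop (nhds x)) {k : ℕ} (hk : ∀ n, k ≤ finrank ℝ (S (z n)))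
    (T : Submodule ℝ V) (hT : {v : V | (x, v) ∈ closure A} ⊆ (T : Set V)) :
    k ≤ finrank ℝ T := by
  classical
  set d := finrank ℝ V with hd
  let e : V ≃L[ℝ] EuclideanSpace ℝ (Fin d) :=
    ContinuousLinearEquiv.ofFinrankEq (by simp [hd])
  have hfam : ∀ n : ℕ, ∃ u : Fin k → EuclideanSpace ℝ (Fin d),
      Orthonormal ℝ u ∧ ∀ j, e.symm (u j) ∈ S (z n) := by
    intro n
    set Tn : Submodule ℝ (EuclideanSpace ℝ (Fin d)) :=
      (S (z n)).map (e.toLinearEquiv : V →ₗ[ℝ] EuclideanSpace ℝ (Fin d)) with hTn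
    have hfr : finrank ℝ Tn = finrank ℝ (S (z n)) :=
      LinearEquiv.finrank_map_eq e.toLinearEquiv _
    have hk' : k ≤ finrank ℝ Tn := by rw [hfr]; exact hk n
    set b := stdOrthonormalBasis ℝ Tn with hb
    refine ⟨fun j => (b (Fin.castLE hk' j) : EuclideanSpace ℝ (Fin d)), ?_, ?_⟩
    · have h1 : Orthonormal ℝ (fun i : Fin k => b (Fin.castLE hk' i)) :=
        b.orthonormal.comp _ (Fin.castLE_injective hk')
      exact Tn.subtypeₗᵢ.orthonormal_comp_iff.mpr h1
    · intro j
      obtain ⟨w, hw, hew⟩ := (b (Fin.castLE hk' j)).2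
      show e.symm ((b (Fin.castLE hk' j) : EuclideanSpace ℝ (Fin d))) ∈ S (z n)
      rw [← hew]
      simpa using hw
  choose u hu hmem using hfam
  have hsph : ∀ n, u n ∈ Set.pi Set.univ
      (fun _ : Fin k => sphere (0 : EuclideanSpace ℝ (Fin d)) 1) := by
    intro n j _
    simpa [mem_sphere_zero_iff_norm] using (hu n).1 j
  obtain ⟨w, -, φ, hφ, hconv⟩ :=
    (isCompact_univ_pi fun _ : Fin k => isCompact_sphere _ _).tendsto_subseq hsph
  have hcoord : ∀ j, Tendsto (fun n => u (φ n) j) atTop (𝓝 (w j)) := by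
    intro j
    exact (tendsto_pi_nhds.1 hconv j)
  have hw_on : Orthonormal ℝ w := by
    rw [orthonormal_iff_ite]
    intro i j
    have h1 : Tendsto (fun n => (inner ℝ (u (φ n) i) (u (φ n) j) : ℝ)) atTop
        (𝓝 (inner ℝ (w i) (w j))) := (hcoord i).inner (hcoord j)
    have h2 : (fun n => (inner ℝ (u (φ n) i) (u (φ n) j) : ℝ))
        = fun _ => if i = j then (1 : ℝ) else 0 := by
      funext n
      exact orthonormal_iff_ite.1 (hu (φ n)) i j
    rw [h2] at h1
    exact tendsto_nhds_unique h1 tendsto_const_nhds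
  have hvT : ∀ j, e.symm (w j) ∈ T := by
    intro j
    apply hT
    show (x, e.symm (w j)) ∈ closure A
    have htend : Tendsto (fun n => ((z (φ n), e.symm (u (φ n) j)) : X × V)) atTop
        (𝓝 (x, e.symm (w j))) := by
      refine Tendsto.prodMk_nhds (hz.comp hφ.tendsto_atTop) ?_
      exact (e.symm.continuous.tendsto _).comp (hcoord j)
    refine mem_closure_of_tendsto htend ?_
    filter_upwards with n
    have h3 : e.symm (u (φ n) j) ∈ (S (z (φ n)) : Set V) := hmem (φ n) j
    rw [← hS] at h3
    exact h3
  have hli : LinearIndependent ℝ (fun j => e.symm (w j)) := by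
    have := (hw_on.linearIndependent).map'
      (e.symm.toLinearEquiv : EuclideanSpace ℝ (Fin d) →ₗ[ℝ] V)
      (LinearMap.ker_eq_bot.2 e.symm.injective)
    exact this
  have hli' : LinearIndependent ℝ (fun j => (⟨e.symm (w j), hvT j⟩ : T)) := by
    apply LinearIndependent.of_comp T.subtype
    exact hli
  simpa using hli'.fintype_card_le_finrank

/-- Glaeser's stabilization lemma: the iterates of a Glaeser operation stabilize
after `2 * r` steps, where `r = dim V`. -/
theorem glaeser_iterate_stabilizes {X V : Type*} [MetricSpace X] [NormedAddCommGroup V]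
    [NormedSpace ℝ V] [FiniteDimensional ℝ V] {r : ℕ} (hr : Module.finrank ℝ V = r)
    (ρ : Set (X × V) → Set (X × V)) (hρ : IsGlaeserOperation ρ)
    (E : Set (X × V)) (hE : IsBundle E) :
    ∀ i : ℕ, 2 * r ≤ i → ρ^[i] E = ρ^[2 * r] E := by
  classical
  set P : ℕ → Set (X × V) := fun n => ρ^[n] E with hP
  have hsucc : ∀ n, P (n + 1) = ρ (P n) := fun n => Function.iterate_succ_apply' ρ n E
  have hB : ∀ n, IsBundle (P n) := by
    intro n
    induction n with
    | zero => exact hE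
    | succ n ih => rw [hsucc]; exact hρ.bundle _ ih
  choose fib hfib using hB
  have hB' : ∀ n, IsBundle (P n) := fun n a => ⟨fib n a, hfib n a⟩
  have hmono : ∀ n a, fib n a ≤ fib (n + 1) a := by
    intro n a v hv
    have h1 : (a, v) ∈ P n := by
      have : v ∈ {w : V | (a, w) ∈ P n} := by rw [hfib n a]; exact hv
      exact this
    have h2 : (a, v) ∈ ρ (P n) := hρ.closure_subset _ (hB' n) (subset_closure h1)
    have h3 : (a, v) ∈ P (n + 1) := by rw [hsucc]; exact h2
    have : v ∈ {w : V | (a, w) ∈ P (n + 1)} := h3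
    rw [hfib (n + 1) a] at this
    exact this
  -- `Neq n a` : the fibre changes at step `n+1` at the point `a`.
  set Neq : ℕ → X → Prop :=
    fun n a => {v : V | (a, v) ∈ P (n + 1)} ≠ {v : V | (a, v) ∈ P n} with hNeq
  have hlt : ∀ n a, Neq n a → finrank ℝ (fib n a) < finrank ℝ (fib (n + 1) a) := by
    intro n a h
    apply Submodule.finrank_lt_finrank_of_lt
    refine lt_of_le_of_ne (hmono n a) ?_
    intro hcon
    apply h
    rw [hfib (n + 1) a, hfib n a, hcon]
  have hloc : ∀ n x, Neq (n + 1) x → ∀ ε : ℝ, 0 < ε → ∃ y, dist y x < ε ∧ Neq n y := by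
    intro n x hx ε hε
    by_contra hcon
    push_neg at hcon
    have heq : ∀ a ∈ ball x ε, {v : V | (a, v) ∈ P n} = {v : V | (a, v) ∈ P (n + 1)} := by
      intro a ha
      have := hcon a (mem_ball.1 ha)
      exact (not_ne_iff.1 this).symm
    have := hρ.isLocal (P n) (P (n + 1)) (hB' n) (hB' (n + 1)) (ball x ε) isOpen_ball heq
      x (mem_ball_self hε)
    rw [← hsucc n, ← hsucc (n + 1)] at this
    exact hx this.symm
  have key : ∀ n, ∀ x, Neq n x → (n + 2) / 2 ≤ finrank ℝ (fib (n + 1) x) := by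
    intro n
    induction n using Nat.strong_induction_on with
    | _ n IH =>
      intro x hx
      by_cases hn : n ≤ 1
      · have := hlt n x hx; omega
      obtain ⟨m, rfl⟩ : ∃ m, n = m + 2 := ⟨n - 2, by omega⟩
      have hzz : ∀ nn : ℕ, ∃ zz : X, dist zz x < 2 / (nn + 1) ∧ Neq m zz := by
        intro nn
        have hpos : (0 : ℝ) < 1 / (nn + 1) := by positivity
        obtain ⟨y, hy1, hy2⟩ := hloc (m + 1) x hx (1 / (nn + 1)) hpos
        obtain ⟨zz, hz1, hz2⟩ := hloc m y hy2 (1 / (nn + 1)) hpos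
        refine ⟨zz, ?_, hz2⟩
        calc dist zz x ≤ dist zz y + dist y x := dist_triangle zz y x
          _ < 1 / (nn + 1) + 1 / (nn + 1) := by linarith
          _ = 2 / (nn + 1) := by ring
      choose zf hzd hzn using hzz
      have hzt : Tendsto zf atTop (𝓝 x) := by
        rw [tendsto_iff_dist_tendsto_zero]
        apply squeeze_zero (fun n => dist_nonneg) (fun n => le_of_lt (hzd n))
        have h3 := tendsto_one_div_add_atTop_nhds_zero_nat.const_mul (2 : ℝ)
        simp only [mul_one_div, mul_zero] at h3
        exact h3
      have hdim : ∀ nn, (m + 2) / 2 ≤ finrank ℝ (fib (m + 1) (zf nn)) :=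
        fun nn => IH m (by omega) _ (hzn nn)
      have h1 : (m + 2) / 2 ≤ finrank ℝ (fib (m + 2) x) := by
        refine glaeser_closure_dim (P (m + 1)) (fib (m + 1)) (hfib (m + 1)) hzt hdim
          (fib (m + 2) x) ?_
        intro v hv
        have h2 : (x, v) ∈ ρ (P (m + 1)) := hρ.closure_subset _ (hB' (m + 1)) hv
        have h3 : v ∈ {w : V | (x, w) ∈ P (m + 2)} := by rw [hsucc (m + 1)]; exact h2
        rw [hfib (m + 2) x] at h3
        exact h3
      have h2 := hlt (m + 2) x hx
      omega
  have stab : ∀ a : X, {v : V | (a, v) ∈ P (2 * r + 1)} = {v : V | (a, v) ∈ P (2 * r)} := by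
    intro a
    by_contra hne
    have h1 := key (2 * r) a hne
    have h2 : finrank ℝ (fib (2 * r + 1) a) ≤ r := hr ▸ Submodule.finrank_le _
    omega
  have Pstab : P (2 * r + 1) = P (2 * r) := by
    ext ⟨a, v⟩
    exact Set.ext_iff.1 (stab a) v
  have hstep : ∀ j, P (2 * r + j) = P (2 * r) := by
    intro j
    induction j with
    | zero => rfl
    | succ j ih =>
      rw [show 2 * r + (j + 1) = (2 * r + j) + 1 by omega, hsucc, ih, ← hsucc]
      exact Pstab
  intro i hi
  have : i = 2 * r + (i - 2 * r) := by omega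
  rw [show ρ^[i] E = P i from rfl, show ρ^[2*r] E = P (2*r) from rfl, this]
  exact hstep _
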